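/- Let (a(n)) be a sequence of real numbers with a(n) ≪_ε n^ε for all ε > 0, ∑_{n≤x} a(n) ≪ x^{β} with β < 1, and ∑_{n≤x} a(n)² = cx + O(x^γ) with c > 0 and γ < 1. Then a(n) > 0 for infinitely many n and a(n) < 0 for infinitely many n. -/
import Mathlib

open Finset Filter Real

theorem sign_key (a : ℕ → ℝ) (β γ c : ℝ) (hβ : β < 1) (hγ : γ < 1) (hc : 0 < c)
    (h1 : ∀ ε : ℝ, 0 < ε → ∃ C : ℝ, ∀ n : ℕ, 1 ≤ n → |a n| ≤ C * (n : ℝ) ^ ε)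
    (h2 : ∃ C : ℝ, ∀ x : ℝ, 1 ≤ x → |∑ n ∈ Finset.Icc 1 ⌊x⌋₊, a n| ≤ C * x ^ β)
    (h3 : ∃ C : ℝ, ∀ x : ℝ, 1 ≤ x →
      |(∑ n ∈ Finset.Icc 1 ⌊x⌋₊, (a n) ^ 2) - c * x| ≤ C * x ^ γ) :
    {n : ℕ | a n < 0}.Infinite := by
  by_contra hfin
  rw [Set.not_infinite] at hfin
  obtain ⟨N0, hN0⟩ := hfin.bddAbove
  set N : ℕ := N0 + 1 with hN
  have hNpos : 1 ≤ N := by omega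
  have hpos : ∀ n, N ≤ n → 0 ≤ a n := by
    intro n hn
    by_contra h
    push_neg at h
    have := hN0 (Set.mem_setOf.mpr h)
    omega
  -- exponents
  set β' : ℝ := max β 0 with hβ'def
  have hβ'lt : β' < 1 := by simp [hβ'def, hβ]
  have hβ'nn : 0 ≤ β' := le_max_right _ _
  have hββ' : β ≤ β' := le_max_left _ _
  set ε : ℝ := (1 - β') / 2 with hεdef
  have hεpos : 0 < ε := by rw [hεdef]; linarith
  set δ : ℝ := max γ ((1 + β') / 2) with hδdef
  have hδlt : δ < 1 := by
    rw [hδdef, max_lt_iff]; constructor <;> linarith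
  have hδpos : 0 < δ := lt_of_lt_of_le (by linarith : (0:ℝ) < (1 + β')/2) (le_max_right _ _)
  have hεδ : ε ≤ δ := le_trans (by rw [hεdef]; linarith : ε ≤ (1 + β')/2) (le_max_right _ _)
  have hεβδ : ε + β ≤ δ :=
    le_trans (by rw [hεdef]; linarith : ε + β ≤ (1 + β')/2) (le_max_right _ _)
  -- constants
  obtain ⟨C1, hC1⟩ := h1 ε hεpos
  obtain ⟨C2, hC2⟩ := h2
  obtain ⟨C3, hC3⟩ := h3
  have hC1nn : 0 ≤ C1 := by
    have := hC1 1 le_rfl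
    simp at this
    exact le_trans (abs_nonneg _) this
  have hC2nn : 0 ≤ C2 := by
    have := hC2 1 le_rfl
    simp at this
    exact le_trans (abs_nonneg _) this
  have hC3nn : 0 ≤ C3 := by
    have := hC3 1 le_rfl
    simp at this
    exact le_trans (abs_nonneg _) this
  have hN1 : (1 : ℝ) ≤ (N : ℝ) := by exact_mod_cast hNpos
  have hNβ : (0 : ℝ) < (N : ℝ) ^ β := Real.rpow_pos_of_pos (by linarith) β
  set K0 : ℝ := ∑ n ∈ Finset.Icc 1 N, (a n) ^ 2 with hK0
  set M : ℝ := C3 + |K0| + C1 * C2 + C1 * C2 * (N : ℝ) ^ β with hM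
  have hMnn : 0 ≤ M := by
    rw [hM]
    have h1' : 0 ≤ C1 * C2 := mul_nonneg hC1nn hC2nn
    have h2' : 0 ≤ C1 * C2 * (N : ℝ) ^ β := mul_nonneg h1' (le_of_lt hNβ)
    positivity
  -- main estimate
  have main : ∀ x : ℝ, (N : ℝ) ≤ x → c * x ≤ M * x ^ δ := by
    intro x hx
    have hx1 : (1 : ℝ) ≤ x := le_trans hN1 hx
    have hx0 : (0 : ℝ) < x := by linarith
    set m : ℕ := ⌊x⌋₊ with hm
    have hNm : N ≤ m := Nat.le_floor hx
    have hmx : (m : ℝ) ≤ x := Nat.floor_le (le_of_lt hx0)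
    -- split the sum
    have hsplit : ∑ n ∈ Finset.Icc 1 m, (a n) ^ 2
        = K0 + ∑ n ∈ Finset.Ioc N m, (a n) ^ 2 := by
      rw [hK0, show Finset.Icc 1 m = Finset.Ioc 0 m from (Finset.Icc_add_one_left_eq_Ioc 0 m),
        show Finset.Icc 1 N = Finset.Ioc 0 N from (Finset.Icc_add_one_left_eq_Ioc 0 N)]
      exact (Finset.sum_Ioc_consecutive _ (Nat.zero_le N) hNm).symm
    -- pointwise bound on the tail
    have htail : ∑ n ∈ Finset.Ioc N m, (a n) ^ 2
        ≤ (C1 * x ^ ε) * ∑ n ∈ Finset.Ioc N m, a n := by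
      rw [Finset.mul_sum]
      apply Finset.sum_le_sum
      intro n hn
      rw [Finset.mem_Ioc] at hn
      have hn1 : 1 ≤ n := le_trans hNpos (le_of_lt hn.1)
      have han : 0 ≤ a n := hpos n (le_of_lt hn.1)
      have hnx : (n : ℝ) ≤ x := le_trans (by exact_mod_cast hn.2) hmx
      have h1n : (1:ℝ) ≤ (n:ℝ) := by exact_mod_cast hn1
      have hb : a n ≤ C1 * x ^ ε := by
        calc a n ≤ |a n| := le_abs_self _
        _ ≤ C1 * (n : ℝ) ^ ε := hC1 n hn1
        _ ≤ C1 * x ^ ε := by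
            apply mul_le_mul_of_nonneg_left _ hC1nn
            exact Real.rpow_le_rpow (by linarith) hnx (le_of_lt hεpos)
      calc (a n) ^ 2 = a n * a n := by ring
      _ ≤ (C1 * x ^ ε) * a n := mul_le_mul_of_nonneg_right hb han
    -- bound the partial sums of a
    have hIoc : ∑ n ∈ Finset.Ioc N m, a n
        = (∑ n ∈ Finset.Icc 1 m, a n) - (∑ n ∈ Finset.Icc 1 N, a n) := by
      rw [show Finset.Icc 1 m = Finset.Ioc 0 m from (Finset.Icc_add_one_left_eq_Ioc 0 m),
        show Finset.Icc 1 N = Finset.Ioc 0 N from (Finset.Icc_add_one_left_eq_Ioc 0 N),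
        ← Finset.sum_Ioc_consecutive _ (Nat.zero_le N) hNm]
      ring
    have hSm : |∑ n ∈ Finset.Icc 1 m, a n| ≤ C2 * x ^ β := hC2 x hx1
    have hSN : |∑ n ∈ Finset.Icc 1 N, a n| ≤ C2 * (N : ℝ) ^ β := by
      have := hC2 (N : ℝ) hN1
      simpa [Nat.floor_natCast] using this
    have hIocle : ∑ n ∈ Finset.Ioc N m, a n ≤ C2 * x ^ β + C2 * (N : ℝ) ^ β := by
      rw [hIoc]
      have := abs_le.mp hSm
      have := abs_le.mp hSN
      cases abs_le.mp hSm with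
      | intro h1' h2' =>
        cases abs_le.mp hSN with
        | intro h3' h4' => linarith
    -- lower bound from h3
    have hlow : c * x - C3 * x ^ γ ≤ ∑ n ∈ Finset.Icc 1 m, (a n) ^ 2 := by
      have := abs_le.mp (hC3 x hx1)
      linarith [this.1]
    -- combine
    have hcomb : c * x ≤ C3 * x ^ γ + K0
        + (C1 * x ^ ε) * (C2 * x ^ β + C2 * (N : ℝ) ^ β) := by
      have htail' : ∑ n ∈ Finset.Ioc N m, (a n) ^ 2
          ≤ (C1 * x ^ ε) * (C2 * x ^ β + C2 * (N : ℝ) ^ β) := by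
        refine le_trans htail ?_
        exact mul_le_mul_of_nonneg_left hIocle
          (mul_nonneg hC1nn (le_of_lt (Real.rpow_pos_of_pos hx0 ε)))
      linarith [hsplit ▸ hlow, htail']
    -- bound everything by x ^ δ
    have hxδ1 : (1 : ℝ) ≤ x ^ δ := Real.one_le_rpow hx1 (le_of_lt hδpos)
    have hxδ0 : (0 : ℝ) < x ^ δ := Real.rpow_pos_of_pos hx0 δ
    have t1 : C3 * x ^ γ ≤ C3 * x ^ δ :=
      mul_le_mul_of_nonneg_left
        (Real.rpow_le_rpow_of_exponent_le hx1 (le_max_left _ _)) hC3nn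
    have t2 : K0 ≤ |K0| * x ^ δ := by
      calc K0 ≤ |K0| := le_abs_self _
      _ = |K0| * 1 := by ring
      _ ≤ |K0| * x ^ δ := mul_le_mul_of_nonneg_left hxδ1 (abs_nonneg _)
    have t3 : (C1 * x ^ ε) * (C2 * x ^ β) ≤ C1 * C2 * x ^ δ := by
      have : x ^ ε * x ^ β = x ^ (ε + β) := (Real.rpow_add hx0 ε β).symm
      calc (C1 * x ^ ε) * (C2 * x ^ β) = C1 * C2 * (x ^ ε * x ^ β) := by ring
      _ = C1 * C2 * x ^ (ε + β) := by rw [this]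
      _ ≤ C1 * C2 * x ^ δ := mul_le_mul_of_nonneg_left
          (Real.rpow_le_rpow_of_exponent_le hx1 hεβδ) (mul_nonneg hC1nn hC2nn)
    have t4 : (C1 * x ^ ε) * (C2 * (N : ℝ) ^ β) ≤ C1 * C2 * (N : ℝ) ^ β * x ^ δ := by
      calc (C1 * x ^ ε) * (C2 * (N : ℝ) ^ β) = C1 * C2 * (N : ℝ) ^ β * x ^ ε := by ring
      _ ≤ C1 * C2 * (N : ℝ) ^ β * x ^ δ := mul_le_mul_of_nonneg_left
          (Real.rpow_le_rpow_of_exponent_le hx1 hεδ)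
          (mul_nonneg (mul_nonneg hC1nn hC2nn) (le_of_lt hNβ))
    calc c * x ≤ C3 * x ^ γ + K0
        + (C1 * x ^ ε) * (C2 * x ^ β + C2 * (N : ℝ) ^ β) := hcomb
    _ = C3 * x ^ γ + K0 + (C1 * x ^ ε) * (C2 * x ^ β)
        + (C1 * x ^ ε) * (C2 * (N : ℝ) ^ β) := by ring
    _ ≤ C3 * x ^ δ + |K0| * x ^ δ + C1 * C2 * x ^ δ
        + C1 * C2 * (N : ℝ) ^ β * x ^ δ := by linarith
    _ = M * x ^ δ := by rw [hM]; ring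
  -- contradiction for large x
  have hlim : Tendsto (fun x : ℝ => x ^ (1 - δ)) atTop atTop :=
    tendsto_rpow_atTop (by linarith)
  have hev : ∀ᶠ x : ℝ in atTop, M / c < x ^ (1 - δ) ∧ (N : ℝ) ≤ x :=
    (hlim.eventually_gt_atTop (M / c)).and (eventually_ge_atTop (N : ℝ))
  obtain ⟨x, hx⟩ := hev.exists
  obtain ⟨hx1, hx2⟩ := hx
  have hx1' : (1 : ℝ) ≤ x := le_trans hN1 hx2
  have hx0 : (0 : ℝ) < x := by linarith
  have hmain := main x hx2
  have hxδ0 : (0 : ℝ) < x ^ δ := Real.rpow_pos_of_pos hx0 δ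
  have hxsplit : x = x ^ (1 - δ) * x ^ δ := by
    rw [← Real.rpow_add hx0]
    norm_num
  have hMlt : M < c * x ^ (1 - δ) := by
    rw [div_lt_iff₀ hc] at hx1
    linarith [hx1]
  have : M * x ^ δ < c * x := by
    calc M * x ^ δ < (c * x ^ (1 - δ)) * x ^ δ :=
      mul_lt_mul_of_pos_right hMlt hxδ0
    _ = c * (x ^ (1 - δ) * x ^ δ) := by ring
    _ = c * x := by rw [← hxsplit]
  linarith

/-- Qualitative sign-change corollary: if `a n ≪_ε n^ε`, `∑_{n≤x} a n ≪ x^β` with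
`β < 1`, and `∑_{n≤x} a n ² = c x + O(x^γ)` with `c > 0`, `γ < 1`, then `a n > 0` for
infinitely many `n` and `a n < 0` for infinitely many `n`. -/
theorem infinitely_many_sign_changes
    (a : ℕ → ℝ) (β γ c : ℝ) (hβ : β < 1) (hγ : γ < 1) (hc : 0 < c)
    (h1 : ∀ ε : ℝ, 0 < ε → ∃ C : ℝ, ∀ n : ℕ, 1 ≤ n → |a n| ≤ C * (n : ℝ) ^ ε)
    (h2 : ∃ C : ℝ, ∀ x : ℝ, 1 ≤ x → |∑ n ∈ Finset.Icc 1 ⌊x⌋₊, a n| ≤ C * x ^ β)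
    (h3 : ∃ C : ℝ, ∀ x : ℝ, 1 ≤ x →
      |(∑ n ∈ Finset.Icc 1 ⌊x⌋₊, (a n) ^ 2) - c * x| ≤ C * x ^ γ) :
    {n : ℕ | 0 < a n}.Infinite ∧ {n : ℕ | a n < 0}.Infinite := by
  constructor
  · have h1' : ∀ ε : ℝ, 0 < ε → ∃ C : ℝ, ∀ n : ℕ, 1 ≤ n →
        |(-(a n))| ≤ C * (n : ℝ) ^ ε := by
      intro ε hε
      obtain ⟨C, hC⟩ := h1 ε hε
      exact ⟨C, fun n hn => by simpa [abs_neg] using hC n hn⟩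
    have h2' : ∃ C : ℝ, ∀ x : ℝ, 1 ≤ x →
        |∑ n ∈ Finset.Icc 1 ⌊x⌋₊, (-(a n))| ≤ C * x ^ β := by
      obtain ⟨C, hC⟩ := h2
      refine ⟨C, fun x hx => ?_⟩
      rw [Finset.sum_neg_distrib, abs_neg]
      exact hC x hx
    have h3' : ∃ C : ℝ, ∀ x : ℝ, 1 ≤ x →
        |(∑ n ∈ Finset.Icc 1 ⌊x⌋₊, (-(a n)) ^ 2) - c * x| ≤ C * x ^ γ := by
      obtain ⟨C, hC⟩ := h3
      refine ⟨C, fun x hx => ?_⟩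
      simpa [neg_sq] using hC x hx
    have h := sign_key (fun n => -(a n)) β γ c hβ hγ hc h1' h2' h3'
    have heq : {n : ℕ | 0 < a n} = {n : ℕ | (fun n => -(a n)) n < 0} := by
      ext n; simp
    rw [heq]
    exact h
  · exact sign_key a β γ c hβ hγ hc h1 h2 h3
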